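/- The Baxter equivalence relation is compatible with restriction to alphabet intervals: for any interval I of the ordered alphabet A and any words u, v in A*, if u is Baxter-equivalent to v, then the restrictions u|_I and v|_I are Baxter-equivalent. -/
import Mathlib


open scoped Classical

/-- Baxter adjacency relations on words over the alphabet of natural numbers. -/
def BaxterAdj (w w' : List ℕ) : Prop :=
  (∃ (a b c d : ℕ) (u v : List ℕ), a ≤ b ∧ b < c ∧ c ≤ d ∧
      w = c :: (u ++ a :: d :: (v ++ [b])) ∧ w' = c :: (u ++ d :: a :: (v ++ [b]))) ∨
  (∃ (a b c d : ℕ) (u v : List ℕ), a < b ∧ b ≤ c ∧ c < d ∧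
      w = b :: (u ++ d :: a :: (v ++ [c])) ∧ w' = b :: (u ++ a :: d :: (v ++ [c])))

/-- One rewriting step: an adjacency applied inside a word (congruence context). -/
def BaxterStep (w w' : List ℕ) : Prop :=
  ∃ (p s u v : List ℕ), BaxterAdj u v ∧ w = p ++ u ++ s ∧ w' = p ++ v ++ s

/-- The Baxter congruence: the equivalence generated by the Baxter steps. -/
def BaxterEquiv : List ℕ → List ℕ → Prop := Relation.EqvGen BaxterStep

/-- Sylvester adjacency: a c u b ≡ c a u b when a ≤ b < c. -/
def SylvAdj (w w' : List ℕ) : Prop :=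
  ∃ (a b c : ℕ) (u : List ℕ), a ≤ b ∧ b < c ∧
    w = a :: c :: (u ++ [b]) ∧ w' = c :: a :: (u ++ [b])

def SylvStep (w w' : List ℕ) : Prop :=
  ∃ (p s u v : List ℕ), SylvAdj u v ∧ w = p ++ u ++ s ∧ w' = p ++ v ++ s

def SylvEquiv : List ℕ → List ℕ → Prop := Relation.EqvGen SylvStep

/-- #-sylvester adjacency: b u a c ≡ b u c a when a < b ≤ c. -/
def SylvHAdj (w w' : List ℕ) : Prop :=
  ∃ (a b c : ℕ) (u : List ℕ), a < b ∧ b ≤ c ∧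
    w = b :: (u ++ [a, c]) ∧ w' = b :: (u ++ [c, a])

def SylvHStep (w w' : List ℕ) : Prop :=
  ∃ (p s u v : List ℕ), SylvHAdj u v ∧ w = p ++ u ++ s ∧ w' = p ++ v ++ s

def SylvHEquiv : List ℕ → List ℕ → Prop := Relation.EqvGen SylvHStep

/-- The standardized word of `u`: position `i` receives the rank of the letter `u i`
(ties broken from left to right), ranks starting at `1`. -/
def std (u : List ℕ) : List ℕ :=
  (List.range u.length).map fun i =>
    ((List.range u.length).filter fun j =>
      decide (u.getD j 0 < u.getD i 0 ∨ (u.getD j 0 = u.getD i 0 ∧ j < i))).length + 1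

/-- The maximal letter of a word. -/
def wordMax (u : List ℕ) : ℕ := u.foldr max 0

/-- The Schützenberger transformation: reverse and complement each letter w.r.t. max + 1. -/
def schutz (u : List ℕ) : List ℕ := u.reverse.map fun x => wordMax u + 1 - x

/-- Labeled binary trees. -/
inductive BT where
  | leaf : BT
  | node : BT → ℕ → BT → BT
deriving DecidableEq

/-- Leaf insertion into a left binary search tree. -/
def leafInsL : BT → ℕ → BT
  | .leaf, a => .node .leaf a .leaf
  | .node l b r, a => if a < b then .node (leafInsL l a) b r else .node l b (leafInsL r a)

/-- Leaf insertion into a right binary search tree. -/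
def leafInsR : BT → ℕ → BT
  | .leaf, a => .node .leaf a .leaf
  | .node l b r, a => if a ≤ b then .node (leafInsR l a) b r else .node l b (leafInsR r a)

/-- The lower restricted tree `T_{≤ a}` of a right binary search tree. -/
def splitLE : BT → ℕ → BT
  | .leaf, _ => .leaf
  | .node l b r, a => if b ≤ a then .node l b (splitLE r a) else splitLE l a

/-- The higher restricted tree `T_{> a}` of a right binary search tree. -/
def splitGT : BT → ℕ → BT
  | .leaf, _ => .leaf
  | .node l b r, a => if b ≤ a then splitGT r a else .node (splitGT l a) b r

/-- Root insertion into a right binary search tree. -/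
def rootIns (t : BT) (a : ℕ) : BT := .node (splitLE t a) a (splitGT t a)

/-- The left tree of the P-symbol: leaf insertions from left to right. -/
def insL (u : List ℕ) : BT := u.foldl leafInsL .leaf

/-- The right tree of the P-symbol: root insertions from left to right. -/
def insR (u : List ℕ) : BT := u.foldl rootIns .leaf

/-- The P-symbol of a word. -/
def Psymb (u : List ℕ) : BT × BT := (insL u, insR u)

/-- Unlabeled binary trees. -/
inductive UBT where
  | leaf : UBT
  | node : UBT → UBT → UBT
deriving DecidableEq

/-- The shape of a labeled binary tree. -/
def shape : BT → UBT
  | .leaf => .leaf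
  | .node l _ r => .node (shape l) (shape r)

/-- The shape of the P-symbol of a word. -/
def Pshape (u : List ℕ) : UBT × UBT := (shape (insL u), shape (insR u))

/-- Number of internal nodes. -/
def sizeU : UBT → ℕ
  | .leaf => 0
  | .node l r => sizeU l + sizeU r + 1

/-- Orientations of the leaves, from left to right: `true` means right-oriented
(the leaf is the right child of its parent); the parameter is the orientation
assigned if the tree is reduced to a leaf. -/
def loU : UBT → Bool → List Bool
  | .leaf, b => [b]
  | .node l r, _ => loU l false ++ loU r true

/-- Leaf orientations of a labeled binary tree. -/
def loB : BT → Bool → List Bool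
  | .leaf, b => [b]
  | .node l _ r, _ => loB l false ++ loB r true

/-- The canopy: orientations of the leaves except the first and the last one. -/
def canU (t : UBT) : List Bool := ((loU t false).drop 1).dropLast

/-- A pair of twin binary trees: same number of nodes and complementary canopies. -/
def IsTwin (J : UBT × UBT) : Prop :=
  sizeU J.1 = sizeU J.2 ∧ (canU J.1).length = (canU J.2).length ∧
    ∀ i < (canU J.1).length, (canU J.1).getD i false ≠ (canU J.2).getD i false

/-- `σ` is (the word of) a permutation of `{1, …, n}`. -/
def IsPerm (n : ℕ) (σ : List ℕ) : Prop := σ.Perm (List.range' 1 n)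

/-- Covering-type step of the right permutohedron (weak) order: exchange of two
adjacent letters `a < b`. -/
def PermutoStep (σ ν : List ℕ) : Prop :=
  ∃ (p s : List ℕ) (a b : ℕ), a < b ∧ σ = p ++ a :: b :: s ∧ ν = p ++ b :: a :: s

/-- The right permutohedron (weak) order. -/
def PermutoLe : List ℕ → List ℕ → Prop := Relation.ReflTransGen PermutoStep

/-- Baxter permutations: avoiding the generalized patterns 2-41-3 and 3-14-2. -/
def IsBaxterPerm (σ : List ℕ) : Prop :=
  ∀ i j k, i < j → j + 1 < k → k < σ.length →
    ¬(σ.getD (j+1) 0 < σ.getD i 0 ∧ σ.getD i 0 < σ.getD k 0 ∧ σ.getD k 0 < σ.getD j 0) ∧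
    ¬(σ.getD j 0 < σ.getD k 0 ∧ σ.getD k 0 < σ.getD i 0 ∧ σ.getD i 0 < σ.getD (j+1) 0)

lemma filter_swap_aux (g : ℕ → Bool) (a d : ℕ) (t : List ℕ)
    (h : ¬(g a = true ∧ g d = true)) :
    List.filter g (a :: d :: t) = List.filter g (d :: a :: t) := by
  simp only [List.filter_cons]
  cases hga : g a <;> cases hgd : g d <;> simp_all

/-- the Baxter equivalence is compatible with restriction to
alphabet intervals. -/
theorem baxter_compatible_with_interval_restriction (I : Set ℕ)
    (hI : ∀ a b c : ℕ, a ∈ I → c ∈ I → a ≤ b → b ≤ c → b ∈ I) :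
    ∀ u v : List ℕ, BaxterEquiv u v →
      BaxterEquiv (u.filter fun x => decide (x ∈ I)) (v.filter fun x => decide (x ∈ I)) := by
  set g : ℕ → Bool := fun x => decide (x ∈ I) with hg
  intro u v h
  induction h with
  | rel x y hxy =>
    obtain ⟨p, s, U, V, hadj, hx, hy⟩ := hxy
    subst hx hy
    rcases hadj with ⟨a, b, c, d, u', v', h1, h2, h3, hU, hV⟩ |
      ⟨a, b, c, d, u', v', h1, h2, h3, hU, hV⟩
    · subst hU hV
      by_cases hmem : a ∈ I ∧ d ∈ I
      · obtain ⟨ha, hd⟩ := hmem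
        have hb : b ∈ I := hI a b d ha hd h1 ((h2.trans_le h3).le)
        have hc : c ∈ I := hI a c d ha hd (h1.trans h2.le) h3
        apply Relation.EqvGen.rel
        refine ⟨p.filter g, s.filter g,
          c :: (u'.filter g ++ a :: d :: (v'.filter g ++ [b])),
          c :: (u'.filter g ++ d :: a :: (v'.filter g ++ [b])),
          Or.inl ⟨a, b, c, d, u'.filter g, v'.filter g, h1, h2, h3, rfl, rfl⟩, ?_, ?_⟩ <;>
          simp [List.filter_append, List.filter_cons, ha, hb, hc, hd, hg]
      · have heq : List.filter g (a :: d :: (v' ++ [b])) =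
            List.filter g (d :: a :: (v' ++ [b])) := by
          apply filter_swap_aux
          simpa [hg] using hmem
        have : List.filter g (p ++ c :: (u' ++ a :: d :: (v' ++ [b])) ++ s) =
            List.filter g (p ++ c :: (u' ++ d :: a :: (v' ++ [b])) ++ s) := by
          simp only [List.filter_append, List.filter_cons, heq]
        rw [this]
        exact Relation.EqvGen.refl _
    · subst hU hV
      by_cases hmem : a ∈ I ∧ d ∈ I
      · obtain ⟨ha, hd⟩ := hmem
        have hb : b ∈ I := hI a b d ha hd h1.le (h2.trans h3.le)
        have hc : c ∈ I := hI a c d ha hd (h1.le.trans h2) h3.le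
        apply Relation.EqvGen.rel
        refine ⟨p.filter g, s.filter g,
          b :: (u'.filter g ++ d :: a :: (v'.filter g ++ [c])),
          b :: (u'.filter g ++ a :: d :: (v'.filter g ++ [c])),
          Or.inr ⟨a, b, c, d, u'.filter g, v'.filter g, h1, h2, h3, rfl, rfl⟩, ?_, ?_⟩ <;>
          simp [List.filter_append, List.filter_cons, ha, hb, hc, hd, hg]
      · have heq : List.filter g (d :: a :: (v' ++ [c])) =
            List.filter g (a :: d :: (v' ++ [c])) := by
          apply (filter_swap_aux g d a _ ?_)
          intro hh; exact hmem ⟨by simpa [hg] using hh.2, by simpa [hg] using hh.1⟩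
        have : List.filter g (p ++ b :: (u' ++ d :: a :: (v' ++ [c])) ++ s) =
            List.filter g (p ++ b :: (u' ++ a :: d :: (v' ++ [c])) ++ s) := by
          simp only [List.filter_append, List.filter_cons, heq]
        rw [this]
        exact Relation.EqvGen.refl _
  | refl x => exact Relation.EqvGen.refl _
  | symm x y _ ih => exact Relation.EqvGen.symm _ _ ih
  | trans x y z _ _ ih1 ih2 => exact Relation.EqvGen.trans _ _ _ ih1 ih2
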